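/- Let M be a real symmetric n×n matrix. For each i ∈ {1,…,n}, the characteristic polynomial of the principal submatrix M[i] obtained by deleting the i-th row and column satisfies Char_{M[i]}(x) = Char_M(x) · Σ_{λ ∈ Λ(M)} α_λ²(i)/(x−λ), where Λ(M) is the set of distinct eigenvalues of M and α_λ(i) = ‖P_λ e_i‖ with P_λ the orthogonal projection onto the λ-eigenspace. -/

import Mathlib

open Polynomial

open Finset Matrix InnerProductSpace in
theorem charpoly_submatrix_eq_sum_angles (n : ℕ)
    (M : Matrix (Fin (n + 1)) (Fin (n + 1)) ℝ) (hM : M.IsSymm) (i : Fin (n + 1)) :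
    (M.submatrix i.succAbove i.succAbove).charpoly =
      ∑ lam ∈ M.charpoly.roots.toFinset,
        Polynomial.C
          (‖(Submodule.orthogonalProjectionOnto
              (Module.End.eigenspace (Matrix.toEuclideanLin M) lam)
              (EuclideanSpace.single i (1 : ℝ)) : EuclideanSpace ℝ (Fin (n + 1)))‖ ^ 2)
          * (M.charpoly /ₘ (X - C lam)) := by
  classical
  have hA : M.IsHermitian := by
    rwa [Matrix.IsHermitian, Matrix.conjTranspose_eq_transpose_of_trivial]
  set d : Fin (n + 1) → ℝ := hA.eigenvalues with hd
  set U : Matrix (Fin (n + 1)) (Fin (n + 1)) ℝ := (hA.eigenvectorUnitary : Matrix (Fin (n+1)) (Fin (n+1)) ℝ) with hUdef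
  set b : OrthonormalBasis (Fin (n + 1)) ℝ (EuclideanSpace ℝ (Fin (n + 1))) :=
    hA.eigenvectorBasis with hbdef
  have hstarU : star (U : Matrix (Fin (n+1)) (Fin (n+1)) ℝ) = Uᵀ := by
    rw [Matrix.star_eq_conjTranspose, Matrix.conjTranspose_eq_transpose_of_trivial]
  have hUU : U * Uᵀ = 1 := by
    rw [← hstarU]
    exact Matrix.mem_unitaryGroup_iff.mp (hA.eigenvectorUnitary).2
  have hUtU : Uᵀ * U = 1 := mul_eq_one_comm.mp hUU
  -- spectral theorem over ℝ
  have hspec : M = U * Matrix.diagonal d * Uᵀ := by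
    have := hA.spectral_theorem
    simp only [Unitary.conjStarAlgAut_apply, Unitary.coe_star, ← hUdef, hstarU] at this
    simpa using this
  -- polynomial matrices
  set φ : Matrix (Fin (n+1)) (Fin (n+1)) ℝ →+* Matrix (Fin (n+1)) (Fin (n+1)) ℝ[X] :=
    (Polynomial.C : ℝ →+* ℝ[X]).mapMatrix with hφdef
  set V : Matrix (Fin (n+1)) (Fin (n+1)) ℝ[X] := φ U with hVdef
  have hVt : Vᵀ = φ Uᵀ := by
    ext a c; simp [hVdef, hφdef]
  have hVV : V * Vᵀ = 1 := by
    rw [hVt, hVdef, ← _root_.map_mul φ, hUU, _root_.map_one φ]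
  have hVtV : Vᵀ * V = 1 := mul_eq_one_comm.mp hVV
  -- charmatrix conjugation
  have hφdiag : φ (Matrix.diagonal d) = Matrix.diagonal (fun j => C (d j)) := by
    ext a c
    by_cases h : a = c
    · subst h; simp [hφdef]
    · simp [hφdef, Matrix.diagonal_apply_ne _ h]
  have hcm : Matrix.charmatrix M =
      V * Matrix.diagonal (fun j => X - C (d j)) * Vᵀ := by
    have h1 : Matrix.diagonal (fun j => X - C (d j)) =
        (X : ℝ[X]) • (1 : Matrix (Fin (n+1)) (Fin (n+1)) ℝ[X])
          - Matrix.diagonal (fun j => C (d j)) := by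
      rw [Matrix.smul_one_eq_diagonal, ← Matrix.diagonal_sub]
    rw [h1, Matrix.mul_sub, Matrix.sub_mul, Matrix.mul_smul, Matrix.mul_one,
      Matrix.smul_mul, hVV, ← hφdiag]
    have h2 : V * φ (Matrix.diagonal d) * Vᵀ = φ M := by
      rw [hVdef, hVt, ← _root_.map_mul φ, ← _root_.map_mul φ, ← hspec]
    rw [h2, Matrix.charmatrix, Matrix.scalar_apply, ← Matrix.smul_one_eq_diagonal]
  -- charpoly as product
  have hchar : M.charpoly = ∏ j, (X - C (d j)) := by
    rw [Matrix.charpoly, hcm, Matrix.det_mul, Matrix.det_mul, mul_comm (V.det),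
      mul_assoc, ← Matrix.det_mul, hVV, Matrix.det_one, mul_one, Matrix.det_diagonal]
  -- divByMonic values
  have hdiv : ∀ j : Fin (n+1), M.charpoly /ₘ (X - C (d j)) =
      ∏ k ∈ univ.erase j, (X - C (d k)) := by
    intro j
    rw [hchar, ← Finset.mul_prod_erase univ _ (mem_univ j),
      mul_divByMonic_cancel_left _ (monic_X_sub_C (d j))]
  -- roots
  have hroots : M.charpoly.roots.toFinset = Finset.image d univ := by
    have : M.charpoly = (Multiset.map (fun a => X - C a) (univ.val.map d)).prod := by
      rw [hchar]
      simp [Finset.prod_eq_multiset_prod, Multiset.map_map, Function.comp_def]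
    rw [this, roots_multiset_prod_X_sub_C]
    ext x
    simp only [Multiset.mem_toFinset, Multiset.mem_map, Finset.mem_val, Finset.mem_image,
      Finset.mem_univ, true_and]
  -- eigenvector facts
  have hbeig : ∀ j, Matrix.toEuclideanLin M (b j) = d j • b j := by
    intro j
    apply (WithLp.equiv 2 _).injective
    show WithLp.ofLp (Matrix.toEuclideanLin M (b j)) = WithLp.ofLp (d j • b j)
    rw [Matrix.ofLp_toEuclideanLin_apply]
    have := hA.mulVec_eigenvectorBasis j
    simpa using this
  have hbmem : ∀ j, (b j : EuclideanSpace ℝ (Fin (n+1))) ∈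
      Module.End.eigenspace (Matrix.toEuclideanLin M) (d j) := fun j =>
    Module.End.mem_eigenspace_iff.mpr (hbeig j)
  have hT : (Matrix.toEuclideanLin M).IsSymmetric :=
    Matrix.isHermitian_iff_isSymmetric.mp hA
  -- projection norm computation
  have hproj : ∀ lam : ℝ,
      ‖(Submodule.orthogonalProjectionOnto
          (Module.End.eigenspace (Matrix.toEuclideanLin M) lam)
          (EuclideanSpace.single i (1 : ℝ)) : EuclideanSpace ℝ (Fin (n + 1)))‖ ^ 2
        = ∑ j ∈ univ.filter (fun j => d j = lam), (b j i) ^ 2 := by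
    intro lam
    set e : EuclideanSpace ℝ (Fin (n+1)) := EuclideanSpace.single i (1 : ℝ) with hedef
    set S : Finset (Fin (n+1)) := univ.filter (fun j => d j = lam) with hSdef
    set w : EuclideanSpace ℝ (Fin (n+1)) := ∑ j ∈ S, ⟪b j, e⟫_ℝ • b j with hwdef
    have hwmem : w ∈ Module.End.eigenspace (Matrix.toEuclideanLin M) lam := by
      apply Submodule.sum_mem
      intro j hj
      apply Submodule.smul_mem
      have hdj : d j = lam := by simpa [hSdef] using hj
      exact hdj ▸ hbmem j
    have hpw : (Submodule.orthogonalProjectionOnto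
        (Module.End.eigenspace (Matrix.toEuclideanLin M) lam) e
          : EuclideanSpace ℝ (Fin (n + 1))) = w := by
      rw [← Submodule.starProjection_apply]
      apply Submodule.eq_starProjection_of_mem_of_inner_eq_zero hwmem
      intro u hu
      have hsplit : e - w = ∑ j ∈ univ \ S, ⟪b j, e⟫_ℝ • b j := by
        have h := b.sum_repr' e
        rw [← Finset.sum_sdiff (Finset.subset_univ S)] at h
        rw [hwdef]
        nth_rewrite 1 [← h]
        exact add_sub_cancel_right _ _
      rw [hsplit, sum_inner]
      apply Finset.sum_eq_zero
      intro j hj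
      have hdj : d j ≠ lam := by
        simp only [Finset.mem_sdiff, Finset.mem_filter, Finset.mem_univ, true_and,
          hSdef] at hj
        exact hj
      rw [real_inner_smul_left]
      have : ⟪(b j : EuclideanSpace ℝ (Fin (n+1))), u⟫_ℝ = 0 :=
        hT.orthogonalFamily_eigenspaces hdj ⟨b j, hbmem j⟩ ⟨u, hu⟩
      rw [this, mul_zero]
    rw [hpw]
    have : ‖w‖ ^ 2 = ⟪w, w⟫_ℝ := (real_inner_self_eq_norm_sq w).symm
    rw [this, hwdef, b.orthonormal.inner_sum]
    apply Finset.sum_congr rfl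
    intro j hj
    have : ⟪(b j : EuclideanSpace ℝ (Fin (n+1))), e⟫_ℝ = b j i := by
      rw [hedef, EuclideanSpace.inner_single_right]
      simp
    rw [this, starRingEnd_apply, star_trivial]
    ring
  -- adjugate conjugation
  have hadjV : V.adjugate = V.det • Vᵀ := by
    calc V.adjugate = V.adjugate * (V * Vᵀ) := by rw [hVV, mul_one]
    _ = (V.adjugate * V) * Vᵀ := by rw [mul_assoc]
    _ = V.det • Vᵀ := by rw [Matrix.adjugate_mul, Matrix.smul_mul, Matrix.one_mul]
  have hadjVt : Vᵀ.adjugate = V.det • V := by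
    calc Vᵀ.adjugate = Vᵀ.adjugate * (Vᵀ * V) := by rw [hVtV, mul_one]
    _ = (Vᵀ.adjugate * Vᵀ) * V := by rw [mul_assoc]
    _ = V.det • V := by
        rw [Matrix.adjugate_mul, Matrix.det_transpose, Matrix.smul_mul, Matrix.one_mul]
  have hdet2 : V.det * V.det = 1 := by
    have := congrArg Matrix.det hVV
    rwa [Matrix.det_mul, Matrix.det_transpose, Matrix.det_one] at this
  have hadj : (Matrix.charmatrix M).adjugate =
      V * Matrix.diagonal (fun j => ∏ k ∈ univ.erase j, (X - C (d k))) * Vᵀ := by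
    rw [hcm, Matrix.adjugate_mul_distrib, Matrix.adjugate_mul_distrib,
      Matrix.adjugate_diagonal, hadjV, hadjVt]
    rw [Matrix.smul_mul, Matrix.mul_smul, Matrix.mul_smul, smul_smul, hdet2, one_smul,
      mul_assoc]
  -- LHS as adjugate entry
  have hcmsub : Matrix.charmatrix (M.submatrix i.succAbove i.succAbove)
      = (Matrix.charmatrix M).submatrix i.succAbove i.succAbove := by
    ext a c
    by_cases h : a = c
    · subst h; simp [Matrix.charmatrix_apply_eq]
    · have h' : i.succAbove a ≠ i.succAbove c := fun hc => h (i.succAbove_right_injective hc)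
      simp [Matrix.charmatrix_apply_ne _ _ _ h, Matrix.charmatrix_apply_ne _ _ _ h']
  have hLHS : (M.submatrix i.succAbove i.succAbove).charpoly
      = (Matrix.charmatrix M).adjugate i i := by
    rw [Matrix.adjugate_fin_succ_eq_det_submatrix, Matrix.charpoly, hcmsub,
      Even.neg_one_pow ⟨(i : ℕ), rfl⟩, one_mul]
  -- entry computation
  have hVij : ∀ j, V i j = C (b j i) := by
    intro j
    simp [hVdef, hφdef, hUdef, hbdef]
  have hentry : (Matrix.charmatrix M).adjugate i i
      = ∑ j, C ((b j i) ^ 2) * ∏ k ∈ univ.erase j, (X - C (d k)) := by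
    rw [hadj, Matrix.mul_apply]
    apply Finset.sum_congr rfl
    intro j _
    rw [Matrix.mul_diagonal, Matrix.transpose_apply, hVij j]
    rw [show ((b j i : ℝ)) ^ 2 = b j i * b j i by ring, _root_.map_mul Polynomial.C]
    ring
  -- assemble
  rw [hLHS, hentry, hroots]
  have hfib : ∑ lam ∈ Finset.image d univ, ∑ j ∈ univ.filter (fun j => d j = lam),
        (C ((b j i) ^ 2) * ∏ k ∈ univ.erase j, (X - C (d k)))
      = ∑ j, C ((b j i) ^ 2) * ∏ k ∈ univ.erase j, (X - C (d k)) :=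
    Finset.sum_fiberwise_of_maps_to (fun j _ => Finset.mem_image_of_mem d (mem_univ j)) _
  rw [← hfib]
  apply Finset.sum_congr rfl
  intro lam _
  rw [hproj lam, map_sum, Finset.sum_mul]
  apply Finset.sum_congr rfl
  intro j hj
  have hdj : d j = lam := (Finset.mem_filter.mp hj).2
  rw [← hdj, hdiv j]
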